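/- Let m be a positive even integer and t a positive integer with t < m/2. Suppose A, B ⊆ Z_m satisfy A ∪ B = Z_m and A ∩ B = {r_1, ..., r_{2t}}. If R_A(n) = R_B(n) for all n ∈ Z_m, then for every n ∈ Z_m, the sum over i = 1,...,2t of the indicator χ_A(n - r_i) equals t + (1/2)·R_{{r_1,...,r_{2t}}}(n). -/
import Mathlib


open Finset

/-- Representation function: number of ordered pairs (a, a') in A × A with a + a' = n. -/
def repFn {m : ℕ} (A : Finset (ZMod m)) (n : ZMod m) : ℕ :=
  ((A ×ˢ A).filter (fun p => p.1 + p.2 = n)).card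

lemma repFn_eq_sum {m : ℕ} [NeZero m] (A : Finset (ZMod m)) (n : ZMod m) :
    (repFn A n : ℤ) = ∑ x : ZMod m, (if x ∈ A then (1:ℤ) else 0) * (if n - x ∈ A then 1 else 0) := by
  have h1 : ((A ×ˢ A).filter (fun p => p.1 + p.2 = n)) =
      (A.filter (fun x => n - x ∈ A)).image (fun x => (x, n - x)) := by
    ext p
    simp only [mem_filter, mem_product, mem_image]
    constructor
    · rintro ⟨⟨h1, h2⟩, h3⟩
      exact ⟨p.1, ⟨h1, by rw [← h3]; simpa using h2⟩, by rw [← h3]; simp⟩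
    · rintro ⟨x, ⟨hx, hx2⟩, rfl⟩
      exact ⟨⟨hx, hx2⟩, by ring⟩
  rw [repFn, h1, card_image_of_injective _ (fun a b h => congrArg Prod.fst h), card_filter]
  push_cast
  symm
  simp only [ite_mul, one_mul, zero_mul, Finset.sum_ite_mem, univ_inter]

lemma sum_repFn {m : ℕ} [NeZero m] (S : Finset (ZMod m)) :
    ∑ n : ZMod m, repFn S n = S.card ^ 2 := by
  rw [sq, ← card_product]
  exact (Finset.card_eq_sum_card_fiberwise (fun p _ => mem_univ (p.1 + p.2))).symm

theorem stmt1 (m t : ℕ) [NeZero m] (hm : Even m) (ht : 0 < t) (htm : t < m / 2)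
    (A B : Finset (ZMod m)) (r : Fin (2 * t) → ZMod m) (hr : Function.Injective r)
    (hU : A ∪ B = Finset.univ) (hI : A ∩ B = Finset.univ.image r)
    (hR : ∀ n : ZMod m, repFn A n = repFn B n) :
    ∀ n : ZMod m,
      2 * (∑ i : Fin (2 * t), if n - r i ∈ A then 1 else 0) =
        2 * t + repFn (A ∩ B) n := by
  intro n
  have hcardZ : Fintype.card (ZMod m) = m := ZMod.card m
  -- cardinality facts
  have hCcard : (A ∩ B).card = 2 * t := by
    rw [hI, Finset.card_image_of_injective _ hr, card_univ, Fintype.card_fin]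
  have hsumcard : A.card + B.card = m + 2 * t := by
    have h := Finset.card_union_add_card_inter A B
    rw [hU, card_univ, hcardZ, hCcard] at h
    omega
  have hABeq : A.card = B.card := by
    have h1 : A.card ^ 2 = B.card ^ 2 := by
      rw [← sum_repFn A, ← sum_repFn B]
      exact Finset.sum_congr rfl fun n _ => hR n
    exact Nat.pow_left_injective (by norm_num) h1
  have hAcard : 2 * A.card = m + 2 * t := by omega
  -- indicator functions over ℤ
  set a : ZMod m → ℤ := fun x => if x ∈ A then 1 else 0 with ha
  set b : ZMod m → ℤ := fun x => if x ∈ B then 1 else 0 with hb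
  set c : ZMod m → ℤ := fun x => if x ∈ A ∩ B then 1 else 0 with hc
  have hpt : ∀ x, b x = 1 + c x - a x := by
    intro x
    have hx : x ∈ A ∨ x ∈ B := by
      have := mem_univ x
      rw [← hU, mem_union] at this
      exact this
    by_cases h1 : x ∈ A <;> by_cases h2 : x ∈ B <;>
      simp [ha, hb, hc, h1, h2, mem_inter] <;> tauto
  -- reindexing lemma: sums of f (n - x) over all x
  have hrev : ∀ f : ZMod m → ℤ, ∑ x : ZMod m, f (n - x) = ∑ x : ZMod m, f x := by
    intro f
    exact Fintype.sum_equiv (Equiv.subLeft n) _ _ (fun x => rfl)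
  -- basic sums
  have hsum_a : ∑ x : ZMod m, a x = A.card := by
    simp [ha, Finset.sum_ite_mem]
  have hsum_c : ∑ x : ZMod m, c x = 2 * t := by
    rw [hc, Finset.sum_ite_mem, univ_inter, Finset.sum_const, hCcard]
    push_cast; ring
  have hsum_one : ∑ _x : ZMod m, (1 : ℤ) = m := by
    simp [hcardZ]
  -- the cross sum S
  set S : ℤ := ∑ x : ZMod m, c x * a (n - x) with hS
  have hS2 : ∑ x : ZMod m, a x * c (n - x) = S := by
    rw [hS]
    rw [← Fintype.sum_equiv (Equiv.subLeft n)
      (fun x => c x * a (n - x)) (fun x => a x * c (n - x)) (fun x => by simp [mul_comm])]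
  -- the key identity from hR
  have hkey : (repFn A n : ℤ) = (repFn B n : ℤ) := by exact_mod_cast hR n
  rw [repFn_eq_sum, repFn_eq_sum] at hkey
  have hexp : ∑ x : ZMod m, (if x ∈ B then (1:ℤ) else 0) * (if n - x ∈ B then 1 else 0)
      = ∑ x : ZMod m, (1 + c x - a x) * (1 + c (n - x) - a (n - x)) := by
    exact Finset.sum_congr rfl fun x _ => by rw [show (if x ∈ B then (1:ℤ) else 0) = b x from rfl,
      show (if n - x ∈ B then (1:ℤ) else 0) = b (n - x) from rfl, hpt x, hpt (n - x)]
  rw [hexp] at hkey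
  have hexpand : ∑ x : ZMod m, (1 + c x - a x) * (1 + c (n - x) - a (n - x))
      = (m : ℤ) + 2 * (2 * t) - 2 * A.card + (repFn (A ∩ B) n : ℤ) - 2 * S
        + ∑ x : ZMod m, a x * a (n - x) := by
    have h1 : ∀ x : ZMod m, (1 + c x - a x) * (1 + c (n - x) - a (n - x))
        = 1 + c (n - x) - a (n - x) + c x + c x * c (n - x) - c x * a (n - x)
          - a x - a x * c (n - x) + a x * a (n - x) := by intro x; ring
    rw [Finset.sum_congr rfl fun x _ => h1 x]
    simp only [Finset.sum_add_distrib, Finset.sum_sub_distrib]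
    rw [hsum_one, hsum_c, hsum_a, hrev c, hrev a, hsum_c, hsum_a, hS2, ← hS]
    have hcc : (repFn (A ∩ B) n : ℤ) = ∑ x : ZMod m, c x * c (n - x) := repFn_eq_sum _ _
    rw [hcc]
    ring
  rw [hexpand] at hkey
  have hSval : 2 * S = 2 * t + (repFn (A ∩ B) n : ℤ) := by
    have hm2 : (2 : ℤ) * A.card = m + 2 * t := by exact_mod_cast hAcard
    linarith
  -- S equals the sum over i
  have hSsum : S = ∑ i : Fin (2 * t), if n - r i ∈ A then (1:ℤ) else 0 := by
    rw [hS]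
    have : ∑ x : ZMod m, c x * a (n - x) = ∑ x ∈ A ∩ B, a (n - x) := by
      simp only [hc, ite_mul, one_mul, zero_mul, Finset.sum_ite_mem, univ_inter]
    rw [this, hI, Finset.sum_image (fun i _ j _ h => hr h)]
  -- conclude
  have : (2 * (∑ i : Fin (2 * t), if n - r i ∈ A then (1:ℕ) else 0) : ℤ)
      = ((2 * t + repFn (A ∩ B) n : ℕ) : ℤ) := by
    push_cast
    rw [show ∑ i : Fin (2*t), (if n - r i ∈ A then (1:ℤ) else 0) = S from hSsum.symm] at *
    · rw [← hSsum]; linarith [hSval]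
  exact_mod_cast this
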